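/- arXiv:2507.03418 — 2 statements merged into one kernel-verified Lean document; each statement's English description precedes it below -/
import Mathlib

section
/- Let V = C^2 ⊗ C^2 ⊗ C^2, where each C^2 has basis {x,y}, symplectic form η with η(x,y)=1, η(x,x)=η(y,y)=0, and let φ : S^2(C^2) → sl_2 be the isomorphism x^2 ↦ X, xy ↦ -H/2, y^2 ↦ -Y (where X,H,Y is the standard sl_2 basis). For scalars s1,s2,s3 define the bracket [v1⊗v2⊗v3, w1⊗w2⊗w3] = s1·φ(v1w1)·η(v2,w2)·η(v3,w3) + s2·η(v1,w1)·φ(v2w2)·η(v3,w3) + s3·η(v1,w1)·η(v2,w2)·φ(v3w3) ∈ sl_2 ⊕ sl_2 ⊕ sl_2, with sl_2⊕sl_2⊕sl_2 acting on V factorwise. Then for u = x⊗x⊗x and w = y⊗y⊗y one has [u,w] = -(1/2)(s1·H1 + s2·H2 + s3·H3), the action of [u,w] on u equals -(1/2)(s1+s2+s3)·u, and consequently the graded Jacobi identity for the triple (u,u,w) holds if and only if s1+s2+s3 = 0. -/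
/-!
Statement 0: The odd-odd bracket of Γ(s1,s2,s3) on V = ℂ²⊗ℂ²⊗ℂ², computed on
u = x⊗x⊗x and w = y⊗y⊗y, and the equivalence of the graded Jacobi identity for
(u,u,w) with s1+s2+s3 = 0.
-/

namespace Stmt0

noncomputable section

open Matrix

abbrev M2 := Matrix (Fin 2) (Fin 2) ℂ

/-- standard sl₂ basis -/
def Xm : M2 := !![0, 1; 0, 0]
def Hm : M2 := !![1, 0; 0, -1]
def Ym : M2 := !![0, 0; 1, 0]

/-- The symplectic form on the basis {x = 0, y = 1} of ℂ², normalized by η(x,y)=1. -/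
def eta : Fin 2 → Fin 2 → ℂ := fun i j =>
  if i = 0 ∧ j = 1 then 1 else if i = 1 ∧ j = 0 then -1 else 0

/-- The isomorphism φ : S²ℂ² → sl₂ on basis products: φ(x²)=X, φ(xy)=-H/2, φ(y²)=-Y. -/
def phi : Fin 2 → Fin 2 → M2 := fun i j =>
  if i = 0 ∧ j = 0 then Xm
  else if i = 1 ∧ j = 1 then -Ym
  else (-(1/2) : ℂ) • Hm

/-- The odd-odd bracket on pure tensors, with values in sl₂ ⊕ sl₂ ⊕ sl₂. -/
def br (s1 s2 s3 : ℂ) (v w : Fin 2 × Fin 2 × Fin 2) : M2 × M2 × M2 :=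
  ( (s1 * eta v.2.1 w.2.1 * eta v.2.2 w.2.2) • phi v.1 w.1,
    (s2 * eta v.1 w.1 * eta v.2.2 w.2.2) • phi v.2.1 w.2.1,
    (s3 * eta v.1 w.1 * eta v.2.1 w.2.1) • phi v.2.2 w.2.2 )

/-- V = ℂ²⊗ℂ²⊗ℂ² realized as functions on basis triples. -/
abbrev V := Fin 2 → Fin 2 → Fin 2 → ℂ

/-- The factorwise action of sl₂ ⊕ sl₂ ⊕ sl₂ on V. -/
def act (A : M2 × M2 × M2) (f : V) : V := fun i j k =>
  (∑ i', A.1 i i' * f i' j k) + (∑ j', A.2.1 j j' * f i j' k) + (∑ k', A.2.2 k k' * f i j k')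

/-- basis vector of V corresponding to a pure tensor of basis vectors -/
def delta (v : Fin 2 × Fin 2 × Fin 2) : V := fun i j k =>
  if i = v.1 ∧ j = v.2.1 ∧ k = v.2.2 then 1 else 0

/-- For u = x⊗x⊗x and w = y⊗y⊗y:
 [u,w] = -(1/2)(s1·H₁ + s2·H₂ + s3·H₃), the action of [u,w] on u is
 -(1/2)(s1+s2+s3)·u, and (since [u,u]=0) the graded Jacobi identity for (u,u,w),
 i.e. [[u,w],u] = 0, holds iff s1+s2+s3 = 0. -/
theorem stmt0 (s1 s2 s3 : ℂ) :
    br s1 s2 s3 (0,0,0) (1,1,1)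
        = ((-(1/2) * s1) • Hm, (-(1/2) * s2) • Hm, (-(1/2) * s3) • Hm)
    ∧ act (br s1 s2 s3 (0,0,0) (1,1,1)) (delta (0,0,0))
        = (-(1/2) * (s1 + s2 + s3)) • delta (0,0,0)
    ∧ br s1 s2 s3 (0,0,0) (0,0,0) = 0
    ∧ (act (br s1 s2 s3 (0,0,0) (1,1,1)) (delta (0,0,0)) = 0 ↔ s1 + s2 + s3 = 0) := by
  have h1 : br s1 s2 s3 (0,0,0) (1,1,1)
      = ((-(1/2) * s1) • Hm, (-(1/2) * s2) • Hm, (-(1/2) * s3) • Hm) := by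
    simp [br, eta, phi, smul_smul, mul_comm]
  have h2 : act (br s1 s2 s3 (0,0,0) (1,1,1)) (delta (0,0,0))
      = (-(1/2) * (s1 + s2 + s3)) • delta (0,0,0) := by
    rw [h1]; funext i j k
    fin_cases i <;> fin_cases j <;> fin_cases k <;>
      simp [act, delta, Hm, Fin.sum_univ_two, Matrix.smul_apply] <;> ring
  refine ⟨h1, h2, ?_, ?_⟩
  · simp [br, eta]
  · rw [h2]
    constructor
    · intro h
      have h0 := congrFun (congrFun (congrFun h 0) 0) 0
      simp only [delta, Matrix.smul_apply, smul_eq_mul, Pi.smul_apply] at h0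
      norm_num at h0
      exact h0
    · intro h; rw [h]; simp

end

end Stmt0
end

section
/- Let s1, s2, s3 ∈ C be nonzero with s1+s2+s3 = 0, and let m be the graded Lie superalgebra of the p_123^IV grading of D(2,1;a): m = g_{-1}⊕g_{-2}⊕g_{-3} with odd e1,e2,e3 spanning g_{-1}, even e4,e5,e6 spanning g_{-2}, odd e7 spanning g_{-3}, and nonzero brackets [e1,e2]=s3·e6, [e1,e3]=s2·e5, [e2,e3]=s1·e4, [e1,e4]=-e7, [e2,e5]=-e7, [e3,e6]=-e7. Then the space of grading-preserving even superderivations D of m (i.e. linear maps with D(g_{-k}) ⊆ g_{-k} satisfying D[x,y] = [Dx,y] + [x,Dy]) is exactly 3-dimensional, consisting of the maps with D(e1)=λ1·e1, D(e2)=λ2·e2, D(e3)=λ3·e3, D(e4)=(λ2+λ3)·e4, D(e5)=(λ1+λ3)·e5, D(e6)=(λ1+λ2)·e6, D(e7)=(λ1+λ2+λ3)·e7 for arbitrary λ1,λ2,λ3 ∈ C. -/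
/-!
Statement 16: For nonzero s1,s2,s3 with s1+s2+s3 = 0, the grade-preserving even
superderivations of the (3|4)-dimensional graded Lie superalgebra m (negative
part of the p₁₂₃^IV grading of D(2,1;a)) form exactly the 3-parameter family of
diagonal maps D(e1)=λ1·e1, D(e2)=λ2·e2, D(e3)=λ3·e3, D(e4)=(λ2+λ3)·e4,
D(e5)=(λ1+λ3)·e5, D(e6)=(λ1+λ2)·e6, D(e7)=(λ1+λ2+λ3)·e7.
-/

namespace Stmt16

noncomputable section

abbrev W := Fin 7 → ℂ

def eV (k : Fin 7) : W := fun l => if l = k then 1 else 0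

/-- depth of basis vectors: e1,e2,e3 ∈ g₋₁, e4,e5,e6 ∈ g₋₂, e7 ∈ g₋₃ -/
def grade : Fin 7 → ℕ := ![1, 1, 1, 2, 2, 2, 3]

/-- structure constants of m, with super-symmetric mirror entries -/
def sc (s1 s2 s3 : ℂ) : Fin 7 → Fin 7 → W := fun i j =>
  match i.val, j.val with
  | 0, 1 => s3 • eV 5
  | 1, 0 => s3 • eV 5
  | 0, 2 => s2 • eV 4
  | 2, 0 => s2 • eV 4
  | 1, 2 => s1 • eV 3
  | 2, 1 => s1 • eV 3
  | 0, 3 => -eV 6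
  | 3, 0 => eV 6
  | 1, 4 => -eV 6
  | 4, 1 => eV 6
  | 2, 5 => -eV 6
  | 5, 2 => eV 6
  | _, _ => 0

def brV (s1 s2 s3 : ℂ) (u v : W) : W :=
  ∑ i, ∑ j, (u i * v j) • sc s1 s2 s3 i j

lemma brV_expand (s1 s2 s3 : ℂ) (u v : W) : brV s1 s2 s3 u v =
    ((u 1 * v 2 + u 2 * v 1) * s1) • eV 3
    + ((u 0 * v 2 + u 2 * v 0) * s2) • eV 4
    + ((u 0 * v 1 + u 1 * v 0) * s3) • eV 5
    + (u 3 * v 0 - u 0 * v 3 + u 4 * v 1 - u 1 * v 4 + u 5 * v 2 - u 2 * v 5) • eV 6 := by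
  unfold brV
  simp [Fin.sum_univ_seven, sc]
  funext k
  simp [eV]
  split_ifs <;> ring

set_option maxHeartbeats 2000000 in
theorem stmt16 (s1 s2 s3 : ℂ) (h1 : s1 ≠ 0) (h2 : s2 ≠ 0) (h3 : s3 ≠ 0)
    (hsum : s1 + s2 + s3 = 0) (D : W →ₗ[ℂ] W) :
    ((∀ i j : Fin 7, grade i ≠ grade j → D (eV i) j = 0)
      ∧ (∀ x y : W, D (brV s1 s2 s3 x y)
            = brV s1 s2 s3 (D x) y + brV s1 s2 s3 x (D y)))
    ↔ ∃ l1 l2 l3 : ℂ,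
        D (eV 0) = l1 • eV 0 ∧ D (eV 1) = l2 • eV 1 ∧ D (eV 2) = l3 • eV 2
        ∧ D (eV 3) = (l2 + l3) • eV 3 ∧ D (eV 4) = (l1 + l3) • eV 4
        ∧ D (eV 5) = (l1 + l2) • eV 5 ∧ D (eV 6) = (l1 + l2 + l3) • eV 6 := by
  constructor
  · rintro ⟨hg, hd⟩
    have h02 : D (eV 0) 2 = 0 := by
      have H := congrFun (hd (eV 0) (eV 0)) 4
      simp only [brV_expand] at H; simp [eV] at H
      apply mul_left_cancel₀ h2; linear_combination -H/2
    have h01 : D (eV 0) 1 = 0 := by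
      have H := congrFun (hd (eV 0) (eV 0)) 5
      simp only [brV_expand] at H; simp [eV] at H
      apply mul_left_cancel₀ h3; linear_combination -H/2
    have h12 : D (eV 1) 2 = 0 := by
      have H := congrFun (hd (eV 1) (eV 1)) 3
      simp only [brV_expand] at H; simp [eV] at H
      apply mul_left_cancel₀ h1; linear_combination -H/2
    have h10 : D (eV 1) 0 = 0 := by
      have H := congrFun (hd (eV 1) (eV 1)) 5
      simp only [brV_expand] at H; simp [eV] at H
      apply mul_left_cancel₀ h3; linear_combination -H/2
    have h21 : D (eV 2) 1 = 0 := by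
      have H := congrFun (hd (eV 2) (eV 2)) 3
      simp only [brV_expand] at H; simp [eV] at H
      apply mul_left_cancel₀ h1; linear_combination -H/2
    have h20 : D (eV 2) 0 = 0 := by
      have H := congrFun (hd (eV 2) (eV 2)) 4
      simp only [brV_expand] at H; simp [eV] at H
      apply mul_left_cancel₀ h2; linear_combination -H/2
    have h33 : D (eV 3) 3 = D (eV 1) 1 + D (eV 2) 2 := by
      have H := congrFun (hd (eV 1) (eV 2)) 3
      simp only [brV_expand] at H; simp [eV] at H
      apply mul_left_cancel₀ h1; linear_combination H
    have h34 : D (eV 3) 4 = 0 := by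
      have H := congrFun (hd (eV 1) (eV 2)) 4
      simp only [brV_expand] at H; simp [eV, h10, h20] at H
      exact H.resolve_left h1
    have h35 : D (eV 3) 5 = 0 := by
      have H := congrFun (hd (eV 1) (eV 2)) 5
      simp only [brV_expand] at H; simp [eV, h20] at H
      exact H.resolve_left h1
    have h44 : D (eV 4) 4 = D (eV 0) 0 + D (eV 2) 2 := by
      have H := congrFun (hd (eV 0) (eV 2)) 4
      simp only [brV_expand] at H; simp [eV] at H
      apply mul_left_cancel₀ h2; linear_combination H
    have h43 : D (eV 4) 3 = 0 := by
      have H := congrFun (hd (eV 0) (eV 2)) 3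
      simp only [brV_expand] at H; simp [eV, h01] at H
      exact H.resolve_left h2
    have h45 : D (eV 4) 5 = 0 := by
      have H := congrFun (hd (eV 0) (eV 2)) 5
      simp only [brV_expand] at H; simp [eV, h21] at H
      exact H.resolve_left h2
    have h55 : D (eV 5) 5 = D (eV 0) 0 + D (eV 1) 1 := by
      have H := congrFun (hd (eV 0) (eV 1)) 5
      simp only [brV_expand] at H; simp [eV] at H
      apply mul_left_cancel₀ h3; linear_combination H
    have h53 : D (eV 5) 3 = 0 := by
      have H := congrFun (hd (eV 0) (eV 1)) 3
      simp only [brV_expand] at H; simp [eV, h02] at H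
      exact H.resolve_left h3
    have h54 : D (eV 5) 4 = 0 := by
      have H := congrFun (hd (eV 0) (eV 1)) 4
      simp only [brV_expand] at H; simp [eV, h12] at H
      exact H.resolve_left h3
    have g03 : D (eV 0) 3 = 0 := hg 0 3 (by decide)
    have g04 : D (eV 0) 4 = 0 := hg 0 4 (by decide)
    have g05 : D (eV 0) 5 = 0 := hg 0 5 (by decide)
    have g06 : D (eV 0) 6 = 0 := hg 0 6 (by decide)
    have g13 : D (eV 1) 3 = 0 := hg 1 3 (by decide)
    have g14 : D (eV 1) 4 = 0 := hg 1 4 (by decide)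
    have g15 : D (eV 1) 5 = 0 := hg 1 5 (by decide)
    have g16 : D (eV 1) 6 = 0 := hg 1 6 (by decide)
    have g23 : D (eV 2) 3 = 0 := hg 2 3 (by decide)
    have g24 : D (eV 2) 4 = 0 := hg 2 4 (by decide)
    have g25 : D (eV 2) 5 = 0 := hg 2 5 (by decide)
    have g26 : D (eV 2) 6 = 0 := hg 2 6 (by decide)
    have g30 : D (eV 3) 0 = 0 := hg 3 0 (by decide)
    have g31 : D (eV 3) 1 = 0 := hg 3 1 (by decide)
    have g32 : D (eV 3) 2 = 0 := hg 3 2 (by decide)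
    have g36 : D (eV 3) 6 = 0 := hg 3 6 (by decide)
    have g40 : D (eV 4) 0 = 0 := hg 4 0 (by decide)
    have g41 : D (eV 4) 1 = 0 := hg 4 1 (by decide)
    have g42 : D (eV 4) 2 = 0 := hg 4 2 (by decide)
    have g46 : D (eV 4) 6 = 0 := hg 4 6 (by decide)
    have g50 : D (eV 5) 0 = 0 := hg 5 0 (by decide)
    have g51 : D (eV 5) 1 = 0 := hg 5 1 (by decide)
    have g52 : D (eV 5) 2 = 0 := hg 5 2 (by decide)
    have g56 : D (eV 5) 6 = 0 := hg 5 6 (by decide)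
    have g60 : D (eV 6) 0 = 0 := hg 6 0 (by decide)
    have g61 : D (eV 6) 1 = 0 := hg 6 1 (by decide)
    have g62 : D (eV 6) 2 = 0 := hg 6 2 (by decide)
    have g63 : D (eV 6) 3 = 0 := hg 6 3 (by decide)
    have g64 : D (eV 6) 4 = 0 := hg 6 4 (by decide)
    have g65 : D (eV 6) 5 = 0 := hg 6 5 (by decide)
    have h66 : D (eV 6) 6 = D (eV 0) 0 + D (eV 1) 1 + D (eV 2) 2 := by
      have H := congrFun (hd (eV 0) (eV 3)) 6
      simp only [brV_expand] at H
      simp [eV, h01, h02, h33, g03, g04, g05, g36, h34, h35] at H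
      linear_combination -H
    refine ⟨D (eV 0) 0, D (eV 1) 1, D (eV 2) 2, ?_, ?_, ?_, ?_, ?_, ?_, ?_⟩
    · funext k; fin_cases k <;> simp [eV, h01, h02, g03, g04, g05, g06]
    · funext k; fin_cases k <;> simp [eV, h10, h12, g13, g14, g15, g16]
    · funext k; fin_cases k <;> simp [eV, h20, h21, g23, g24, g25, g26]
    · funext k; fin_cases k <;> simp [eV, h33, h34, h35, g30, g31, g32, g36]
    · funext k; fin_cases k <;> simp [eV, h43, h44, h45, g40, g41, g42, g46]
    · funext k; fin_cases k <;> simp [eV, h53, h54, h55, g50, g51, g52, g56]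
    · funext k; fin_cases k <;> simp [eV, h66, g60, g61, g62, g63, g64, g65]
  · rintro ⟨l1, l2, l3, hA, hB, hC, hD4, hD5, hD6, hD7⟩
    have hx : ∀ z : W, D z = fun k =>
        (if k = 0 then l1 else if k = 1 then l2 else if k = 2 then l3 else
         if k = 3 then l2 + l3 else if k = 4 then l1 + l3 else
         if k = 5 then l1 + l2 else l1 + l2 + l3) * z k := by
      intro z
      have hz : z = z 0 • eV 0 + z 1 • eV 1 + z 2 • eV 2 + z 3 • eV 3
          + z 4 • eV 4 + z 5 • eV 5 + z 6 • eV 6 := by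
        funext k; fin_cases k <;> simp [eV]
      conv_lhs => rw [hz]
      simp only [map_add, map_smul, hA, hB, hC, hD4, hD5, hD6, hD7]
      funext k; fin_cases k <;> simp [eV] <;> ring
    constructor
    · intro i j hij
      have hij' : j ≠ i := fun h => hij (by rw [h])
      rw [hx (eV i)]
      simp [eV, hij']
    · intro x y
      simp only [brV_expand, hx]
      funext k; fin_cases k <;> simp [eV] <;> ring


end

end Stmt16
end
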